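/- arXiv:2010.15662 — 6 statements merged into one kernel-verified Lean document; each statement's English description precedes it below -/
import Mathlib

section
/- If three binary classifiers are independent in their errors on a sample in which both labels occur, then the ground-truth tuple (φ_α, φ_{1,α}, φ_{2,α}, φ_{3,α}, φ_{1,β}, φ_{2,β}, φ_{3,β}) satisfies the independent-classifiers quartic system associated with the observed frequencies f_{ℓ₁,ℓ₂,ℓ₃} = m_{ℓ₁,ℓ₂,ℓ₃}/M; that is, for every label triple (ℓ₁, ℓ₂, ℓ₃), m_{ℓ₁,ℓ₂,ℓ₃}/M = φ_α·Π_{i=1}^{3} p_i(ℓ_i) + (1 − φ_α)·Π_{i=1}^{3} q_i(ℓ_i), where p_i(α) = φ_{i,α}, p_i(β) = 1 − φ_{i,α}, q_i(α) = 1 − φ_{i,β}, q_i(β) = φ_{i,β}. -/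
/-!
Labels are modeled by `Bool`, with `true` playing the role of α and `false` the role of β.
A sample is `Fin M` with a true-label function `t : Fin M → Bool`; the three binary
classifiers are `c : Fin 3 → Fin M → Bool`.
-/

open Finset

/-- `labelCount M t ℓ` is `m(ℓ)`, the number of items with true label `ℓ`. -/
def labelCount (M : ℕ) (t : Fin M → Bool) (ℓ : Bool) : ℕ :=
  (univ.filter fun d => t d = ℓ).card

/-- The prevalence `φ_α = m(α)/M` of the label α (`true`). -/
noncomputable def prevalence (M : ℕ) (t : Fin M → Bool) : ℝ :=
  (labelCount M t true : ℝ) / M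

/-- The label accuracy `φ_{i,ℓ}` of a classifier `c` on the label `ℓ`. -/
noncomputable def accuracy (M : ℕ) (t : Fin M → Bool) (c : Fin M → Bool) (ℓ : Bool) : ℝ :=
  ((univ.filter fun d => t d = ℓ ∧ c d = ℓ).card : ℝ) / (labelCount M t ℓ : ℝ)

/-- The decision event count `m_{ℓ₁,ℓ₂,ℓ₃}` for three classifiers. -/
def decisionCount (M : ℕ) (c : Fin 3 → Fin M → Bool) (L : Fin 3 → Bool) : ℕ :=
  (univ.filter fun d => ∀ i, c i d = L i).card

/-- The right-hand side of the independent-classifiers quartic system at the label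
triple `L`, in the unknowns `(φ, a₁, a₂, a₃, b₁, b₂, b₃)`:
`φ·Π p_i(ℓ_i) + (1−φ)·Π q_i(ℓ_i)` with `p_i(α) = a_i`, `p_i(β) = 1 − a_i`,
`q_i(α) = 1 − b_i`, `q_i(β) = b_i`. -/
noncomputable def quarticRHS (φ : ℝ) (a b : Fin 3 → ℝ) (L : Fin 3 → Bool) : ℝ :=
  φ * ∏ i, (if L i then a i else 1 - a i) +
    (1 - φ) * ∏ i, (if L i then 1 - b i else b i)

/-- The three classifiers are independent in their errors on the sample:
for each label `ℓ` occurring in the sample and each triple of decisions,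
`m(ℓ)² · #{d : t d = ℓ ∧ ∀ i, c_i d = ℓ_i} = Π_i #{d : t d = ℓ ∧ c_i d = ℓ_i}`. -/
def IndependentErrors (M : ℕ) (t : Fin M → Bool) (c : Fin 3 → Fin M → Bool) : Prop :=
  ∀ ℓ : Bool, 0 < labelCount M t ℓ → ∀ L : Fin 3 → Bool,
    (labelCount M t ℓ) ^ 2 * (univ.filter fun d => t d = ℓ ∧ ∀ i, c i d = L i).card
      = ∏ i, (univ.filter fun d => t d = ℓ ∧ c i d = L i).card

/-- If three binary classifiers are independent in their errors on a
sample in which both labels occur, then the ground-truth tuple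
`(φ_α, φ_{1,α}, φ_{2,α}, φ_{3,α}, φ_{1,β}, φ_{2,β}, φ_{3,β})` satisfies the
independent-classifiers quartic system associated with the observed frequencies
`f_{ℓ₁,ℓ₂,ℓ₃} = m_{ℓ₁,ℓ₂,ℓ₃}/M`. -/
theorem ground_truth_satisfies_quartic_system
    (M : ℕ) (hM : 1 ≤ M) (t : Fin M → Bool) (c : Fin 3 → Fin M → Bool)
    (hα : 0 < labelCount M t true) (hβ : 0 < labelCount M t false)
    (hind : IndependentErrors M t c) :
    ∀ L : Fin 3 → Bool,
      (decisionCount M c L : ℝ) / M =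
        quarticRHS (prevalence M t)
          (fun i => accuracy M t (c i) true)
          (fun i => accuracy M t (c i) false) L := by
  
  classical
  intro L
  have hM0 : (0:ℝ) < M := by exact_mod_cast hM
  have hmαR : (0:ℝ) < (labelCount M t true : ℝ) := by exact_mod_cast hα
  have hmβR : (0:ℝ) < (labelCount M t false : ℝ) := by exact_mod_cast hβ
  -- split any count by true label
  have hsplit : ∀ (p : Fin M → Prop) (_ : DecidablePred p),
      (univ.filter p).card = (univ.filter fun d => t d = true ∧ p d).card
        + (univ.filter fun d => t d = false ∧ p d).card := by
    intro p hp
    simp only [Finset.card_filter]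
    rw [← Finset.sum_add_distrib]
    refine Finset.sum_congr rfl fun d _ => ?_
    cases h : t d <;> by_cases hpd : p d <;> simp [h, hpd]
  -- complement within a label class
  have hcomp : ∀ (ℓ : Bool) (f : Fin M → Bool),
      (univ.filter fun d => t d = ℓ ∧ f d = true).card
        + (univ.filter fun d => t d = ℓ ∧ f d = false).card = labelCount M t ℓ := by
    intro ℓ f
    unfold labelCount
    simp only [Finset.card_filter]
    rw [← Finset.sum_add_distrib]
    refine Finset.sum_congr rfl fun d _ => ?_
    by_cases h : t d = ℓ <;> cases hf : f d <;> simp [h, hf]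
  have hsum : labelCount M t true + labelCount M t false = M := by
    have h := hsplit (fun _ => True) (by infer_instance)
    simp only [and_true, Finset.filter_true, Finset.card_univ, Fintype.card_fin] at h
    simpa [labelCount] using h.symm
  -- per-classifier factor, label true
  have hBt : ∀ i, (if L i then accuracy M t (c i) true else 1 - accuracy M t (c i) true)
      = ((univ.filter fun d => t d = true ∧ c i d = L i).card : ℝ)
        / (labelCount M t true : ℝ) := by
    intro i
    cases hL : L i with
    | true =>
      simp only [if_pos, accuracy, hL]
    | false =>
      have hc : ((univ.filter fun d => t d = true ∧ c i d = true).card : ℝ)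
          + ((univ.filter fun d => t d = true ∧ c i d = false).card : ℝ)
          = (labelCount M t true : ℝ) := by exact_mod_cast hcomp true (c i)
      simp only [if_neg, Bool.false_eq_true, not_false_iff, accuracy, hL]
      field_simp
      linarith
  -- per-classifier factor, label false
  have hBf : ∀ i, (if L i then 1 - accuracy M t (c i) false else accuracy M t (c i) false)
      = ((univ.filter fun d => t d = false ∧ c i d = L i).card : ℝ)
        / (labelCount M t false : ℝ) := by
    intro i
    cases hL : L i with
    | false =>
      simp only [if_neg, Bool.false_eq_true, not_false_iff, accuracy, hL]
    | true =>
      have hc : ((univ.filter fun d => t d = false ∧ c i d = true).card : ℝ)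
          + ((univ.filter fun d => t d = false ∧ c i d = false).card : ℝ)
          = (labelCount M t false : ℝ) := by exact_mod_cast hcomp false (c i)
      simp only [if_pos, accuracy, hL]
      field_simp
      linarith
  -- independence identities over ℝ
  have hiα : ((labelCount M t true : ℝ))^2
      * ((univ.filter fun d => t d = true ∧ ∀ i, c i d = L i).card : ℝ)
      = ∏ i, ((univ.filter fun d => t d = true ∧ c i d = L i).card : ℝ) := by
    exact_mod_cast hind true hα L
  have hiβ : ((labelCount M t false : ℝ))^2
      * ((univ.filter fun d => t d = false ∧ ∀ i, c i d = L i).card : ℝ)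
      = ∏ i, ((univ.filter fun d => t d = false ∧ c i d = L i).card : ℝ) := by
    exact_mod_cast hind false hβ L
  -- split the decision count
  have hdec : (decisionCount M c L : ℝ)
      = ((univ.filter fun d => t d = true ∧ ∀ i, c i d = L i).card : ℝ)
        + ((univ.filter fun d => t d = false ∧ ∀ i, c i d = L i).card : ℝ) := by
    have h := hsplit (fun d => ∀ i, c i d = L i) (by infer_instance)
    unfold decisionCount
    exact_mod_cast h
  have hsumR : (labelCount M t true : ℝ) + (labelCount M t false : ℝ) = M := by
    exact_mod_cast hsum
  -- assemble
  unfold quarticRHS prevalence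
  rw [Finset.prod_congr rfl (fun i _ => hBt i), Finset.prod_congr rfl (fun i _ => hBf i),
    Finset.prod_div_distrib, Finset.prod_div_distrib, Finset.prod_const, Finset.prod_const,
    Finset.card_univ, Fintype.card_fin, ← hiα, ← hiβ, hdec]
  have h1φ : 1 - (labelCount M t true : ℝ) / M = (labelCount M t false : ℝ) / M := by
    field_simp
    linarith
  rw [h1φ]
  generalize ((univ.filter fun d => t d = true ∧ ∀ i, c i d = L i).card : ℝ) = A
  generalize ((univ.filter fun d => t d = false ∧ ∀ i, c i d = L i).card : ℝ) = B
  generalize (labelCount M t true : ℝ) = a at hmαR ⊢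
  generalize (labelCount M t false : ℝ) = b at hmβR ⊢
  generalize (M : ℝ) = m at hM0 ⊢
  field_simp
end

section
/- For two arbitrarily correlated binary classifiers on a sample in which both labels occur, the number of items on which classifier 1 outputs α and classifier 2 outputs β satisfies the exact polynomial identity m_{α,β} = m(α)·(φ_{1,α}·(1 − φ_{2,α}) − Γ_{1,2;α}) + m(β)·((1 − φ_{1,β})·φ_{2,β} − Γ_{1,2;β}). -/
/-!
Labels are modeled by `Bool`, with `true` playing the role of α and `false` the role of β.
A sample is `Fin M` with a true-label function `t : Fin M → Bool`; binary classifiers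
are functions `Fin M → Bool`.
-/

open Finset

/-- The indicator `x_{d,i}`: `1` if classifier `c` labels item `d` correctly, else `0`. -/
noncomputable def xind (M : ℕ) (t : Fin M → Bool) (c : Fin M → Bool) (d : Fin M) : ℝ :=
  if c d = t d then 1 else 0

/-- The 2-way error correlation `Γ_{i,j;ℓ}` of classifiers `ci`, `cj` on label `ℓ`. -/
noncomputable def gamma2 (M : ℕ) (t : Fin M → Bool) (ci cj : Fin M → Bool) (ℓ : Bool) : ℝ :=
  (∑ d ∈ univ.filter fun d => t d = ℓ,
      (xind M t ci d - accuracy M t ci ℓ) * (xind M t cj d - accuracy M t cj ℓ)) /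
    (labelCount M t ℓ : ℝ)

/-- The 3-way error correlation `Γ_{1,2,3;ℓ}` of three classifiers on label `ℓ`. -/
noncomputable def gamma3 (M : ℕ) (t : Fin M → Bool) (c1 c2 c3 : Fin M → Bool) (ℓ : Bool) : ℝ :=
  (∑ d ∈ univ.filter fun d => t d = ℓ,
      (xind M t c1 d - accuracy M t c1 ℓ) * (xind M t c2 d - accuracy M t c2 ℓ) *
        (xind M t c3 d - accuracy M t c3 ℓ)) /
    (labelCount M t ℓ : ℝ)


lemma sum_xind_eq (M : ℕ) (t c : Fin M → Bool) (ℓ : Bool) :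
    ∑ d ∈ univ.filter (fun d => t d = ℓ), xind M t c d
      = ((univ.filter fun d => t d = ℓ ∧ c d = ℓ).card : ℝ) := by
  classical
  rw [Finset.sum_congr rfl (fun d hd => by
    simp only [mem_filter] at hd
    show xind M t c d = if c d = ℓ then (1:ℝ) else 0
    simp [xind, hd.2])]
  rw [Finset.sum_boole, Finset.filter_filter]

lemma sum_xind_mul_eq (M : ℕ) (t c1 c2 : Fin M → Bool) (ℓ : Bool) :
    ∑ d ∈ univ.filter (fun d => t d = ℓ), xind M t c1 d * xind M t c2 d
      = ((univ.filter fun d => t d = ℓ ∧ c1 d = ℓ ∧ c2 d = ℓ).card : ℝ) := by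
  classical
  rw [Finset.sum_congr rfl (fun d hd => by
    simp only [mem_filter] at hd
    show xind M t c1 d * xind M t c2 d = if c1 d = ℓ ∧ c2 d = ℓ then (1:ℝ) else 0
    simp only [xind, hd.2]
    split_ifs <;> simp_all)]
  rw [Finset.sum_boole, Finset.filter_filter]

lemma gamma2_comm (M : ℕ) (t c1 c2 : Fin M → Bool) (ℓ : Bool) :
    gamma2 M t c1 c2 ℓ = gamma2 M t c2 c1 ℓ := by
  unfold gamma2
  congr 1
  exact Finset.sum_congr rfl fun d _ => mul_comm _ _

lemma per_label (M : ℕ) (t c1 c2 : Fin M → Bool) (ℓ : Bool)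
    (h : 0 < labelCount M t ℓ) :
    (labelCount M t ℓ : ℝ) *
        (accuracy M t c1 ℓ * (1 - accuracy M t c2 ℓ) - gamma2 M t c1 c2 ℓ)
      = ((univ.filter fun d => t d = ℓ ∧ c1 d = ℓ ∧ c2 d ≠ ℓ).card : ℝ) := by
  classical
  have hm : (labelCount M t ℓ : ℝ) ≠ 0 := by
    exact_mod_cast h.ne'
  set m : ℝ := (labelCount M t ℓ : ℝ) with hmdef
  set S1 : ℝ := ((univ.filter fun d => t d = ℓ ∧ c1 d = ℓ).card : ℝ) with hS1
  set S2 : ℝ := ((univ.filter fun d => t d = ℓ ∧ c2 d = ℓ).card : ℝ) with hS2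
  set S12 : ℝ := ((univ.filter fun d => t d = ℓ ∧ c1 d = ℓ ∧ c2 d = ℓ).card : ℝ) with hS12
  have ha1 : accuracy M t c1 ℓ = S1 / m := rfl
  have ha2 : accuracy M t c2 ℓ = S2 / m := rfl
  have hcard : ((univ.filter fun d => t d = ℓ).card : ℝ) = m := by
    simp [hmdef, labelCount]
  have hsplit : S12 + ((univ.filter fun d => t d = ℓ ∧ c1 d = ℓ ∧ c2 d ≠ ℓ).card : ℝ) = S1 := by
    rw [hS12, hS1]
    norm_cast
    have := Finset.card_filter_add_card_filter_not
      (s := univ.filter fun d => t d = ℓ ∧ c1 d = ℓ) (p := fun d => c2 d = ℓ)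
    rw [Finset.filter_filter, Finset.filter_filter] at this
    convert this using 3 <;> simp [and_assoc]
  have hΓ : gamma2 M t c1 c2 ℓ = (S12 - S2/m * S1 - S1/m * S2 + m * (S1/m * (S2/m))) / m := by
    unfold gamma2
    congr 1
    rw [ha1, ha2]
    have expand : ∀ d, (xind M t c1 d - S1/m) * (xind M t c2 d - S2/m)
        = xind M t c1 d * xind M t c2 d - S2/m * xind M t c1 d - S1/m * xind M t c2 d
          + S1/m * (S2/m) := fun d => by ring
    rw [Finset.sum_congr rfl fun d _ => expand d]
    rw [Finset.sum_add_distrib, Finset.sum_sub_distrib, Finset.sum_sub_distrib,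
      ← Finset.mul_sum, ← Finset.mul_sum, Finset.sum_const, nsmul_eq_mul,
      sum_xind_eq, sum_xind_eq, sum_xind_mul_eq, hcard]
  rw [ha1, ha2, hΓ, ← hsplit]
  field_simp
  ring

/-- For two arbitrarily correlated binary classifiers on a sample in
which both labels occur, the number of items on which classifier 1 outputs α and
classifier 2 outputs β satisfies the exact polynomial identity
`m_{α,β} = m(α)·(φ_{1,α}·(1 − φ_{2,α}) − Γ_{1,2;α})
        + m(β)·((1 − φ_{1,β})·φ_{2,β} − Γ_{1,2;β})`. -/
theorem decision_count_pair_identity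
    (M : ℕ) (t : Fin M → Bool) (c1 c2 : Fin M → Bool)
    (hα : 0 < labelCount M t true) (hβ : 0 < labelCount M t false) :
    ((univ.filter fun d => c1 d = true ∧ c2 d = false).card : ℝ) =
      (labelCount M t true : ℝ) *
        (accuracy M t c1 true * (1 - accuracy M t c2 true) - gamma2 M t c1 c2 true) +
      (labelCount M t false : ℝ) *
        ((1 - accuracy M t c1 false) * accuracy M t c2 false - gamma2 M t c1 c2 false) := by
  classical
  have h1 := per_label M t c1 c2 true hα
  have h2 := per_label M t c2 c1 false hβ
  rw [gamma2_comm M t c2 c1 false] at h2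
  have harr : (1 - accuracy M t c1 false) * accuracy M t c2 false
      = accuracy M t c2 false * (1 - accuracy M t c1 false) := by ring
  rw [harr, h1, h2]
  have hsplit := Finset.card_filter_add_card_filter_not
    (s := univ.filter fun d => c1 d = true ∧ c2 d = false) (p := fun d => t d = true)
  rw [Finset.filter_filter, Finset.filter_filter] at hsplit
  have e1 : (univ.filter fun d => t d = true ∧ c1 d = true ∧ c2 d ≠ true)
      = (univ.filter fun d => (c1 d = true ∧ c2 d = false) ∧ t d = true) := by
    ext d
    simp only [mem_filter, mem_univ, true_and]
    cases ht : t d <;> cases h1 : c1 d <;> cases h2 : c2 d <;> simp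
  have e2 : (univ.filter fun d => t d = false ∧ c2 d = false ∧ c1 d ≠ false)
      = (univ.filter fun d => (c1 d = true ∧ c2 d = false) ∧ ¬ t d = true) := by
    ext d
    simp only [mem_filter, mem_univ, true_and]
    cases ht : t d <;> cases h1 : c1 d <;> cases h2 : c2 d <;> simp
  rw [e1, e2]
  exact_mod_cast hsplit.symm
end

section
/- For three arbitrarily correlated binary classifiers on a sample of M items in which both labels occur, the frequency of the decision event (β, α, β) satisfies the exact polynomial identity m_{β,α,β}/M = φ_α·((1 − φ_{1,α})·φ_{2,α}·(1 − φ_{3,α}) − Γ_{1,2;α}·(1 − φ_{3,α}) + Γ_{1,3;α}·φ_{2,α} − Γ_{2,3;α}·(1 − φ_{1,α}) + Γ_{1,2,3;α}) + (1 − φ_α)·(φ_{1,β}·(1 − φ_{2,β})·φ_{3,β} − Γ_{1,2;β}·φ_{3,β} + Γ_{1,3;β}·(1 − φ_{2,β}) − Γ_{2,3;β}·φ_{1,β} − Γ_{1,2,3;β}). -/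
/-!
Labels are modeled by `Bool`, with `true` playing the role of α and `false` the role of β.
A sample is `Fin M` with a true-label function `t : Fin M → Bool`; binary classifiers
are functions `Fin M → Bool`.
-/

open Finset

/-- Sum of the correctness indicator over items of label `ℓ` equals `m(ℓ)·φ`. -/
lemma aux_sum_xind (M : ℕ) (t c : Fin M → Bool) (ℓ : Bool) (h : 0 < labelCount M t ℓ) :
    ∑ d ∈ univ.filter (fun d => t d = ℓ), xind M t c d
      = ((univ.filter fun d => t d = ℓ).card : ℝ) * accuracy M t c ℓ := by
  have hm : ((labelCount M t ℓ : ℝ)) ≠ 0 := by positivity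
  have : ∑ d ∈ univ.filter (fun d => t d = ℓ), xind M t c d
      = ((univ.filter fun d => t d = ℓ ∧ c d = ℓ).card : ℝ) := by
    have : ∀ d ∈ univ.filter (fun d => t d = ℓ), xind M t c d = if c d = ℓ then (1:ℝ) else 0 := by
      intro d hd
      simp only [Finset.mem_filter] at hd
      simp [xind, hd.2]
    rw [Finset.sum_congr rfl this, Finset.sum_boole, ← Finset.filter_filter]
  rw [this, accuracy]
  rw [mul_div_assoc', mul_comm, mul_div_assoc,
    show ((univ.filter fun d => t d = ℓ).card : ℝ) = (labelCount M t ℓ : ℝ) from rfl,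
    div_self hm, mul_one]

lemma aux_expand_true (M : ℕ) (S : Finset (Fin M)) (x1 x2 x3 : Fin M → ℝ) (p1 p2 p3 : ℝ)
    (h1 : ∑ d ∈ S, x1 d = S.card * p1)
    (h2 : ∑ d ∈ S, x2 d = S.card * p2)
    (h3 : ∑ d ∈ S, x3 d = S.card * p3) :
    ∑ d ∈ S, (1 - x1 d) * x2 d * (1 - x3 d) =
      S.card * ((1-p1)*p2*(1-p3))
      - (∑ d ∈ S, (x1 d - p1)*(x2 d - p2)) * (1-p3)
      + (∑ d ∈ S, (x1 d - p1)*(x3 d - p3)) * p2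
      - (∑ d ∈ S, (x2 d - p2)*(x3 d - p3)) * (1-p1)
      + ∑ d ∈ S, (x1 d - p1)*(x2 d - p2)*(x3 d - p3) := by
  have key : ∀ d ∈ S, (1 - x1 d) * x2 d * (1 - x3 d) =
      (1-p1)*p2*(1-p3)
      - p2*(1-p3) * (x1 d - p1) + (1-p1)*(1-p3) * (x2 d - p2) - (1-p1)*p2 * (x3 d - p3)
      - (1-p3) * ((x1 d - p1)*(x2 d - p2)) + p2 * ((x1 d - p1)*(x3 d - p3))
      - (1-p1) * ((x2 d - p2)*(x3 d - p3)) + (x1 d - p1)*(x2 d - p2)*(x3 d - p3) := by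
    intro d _; ring
  rw [Finset.sum_congr rfl key]
  simp only [Finset.sum_add_distrib, Finset.sum_sub_distrib, ← Finset.mul_sum,
    Finset.sum_const, nsmul_eq_mul, h1, h2, h3]
  ring

lemma aux_expand_false (M : ℕ) (S : Finset (Fin M)) (x1 x2 x3 : Fin M → ℝ) (p1 p2 p3 : ℝ)
    (h1 : ∑ d ∈ S, x1 d = S.card * p1)
    (h2 : ∑ d ∈ S, x2 d = S.card * p2)
    (h3 : ∑ d ∈ S, x3 d = S.card * p3) :
    ∑ d ∈ S, x1 d * (1 - x2 d) * x3 d =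
      S.card * (p1*(1-p2)*p3)
      - (∑ d ∈ S, (x1 d - p1)*(x2 d - p2)) * p3
      + (∑ d ∈ S, (x1 d - p1)*(x3 d - p3)) * (1-p2)
      - (∑ d ∈ S, (x2 d - p2)*(x3 d - p3)) * p1
      - ∑ d ∈ S, (x1 d - p1)*(x2 d - p2)*(x3 d - p3) := by
  have key : ∀ d ∈ S, x1 d * (1 - x2 d) * x3 d =
      p1*(1-p2)*p3
      + (1-p2)*p3 * (x1 d - p1) - p1*p3 * (x2 d - p2) + p1*(1-p2) * (x3 d - p3)
      - p3 * ((x1 d - p1)*(x2 d - p2)) + (1-p2) * ((x1 d - p1)*(x3 d - p3))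
      - p1 * ((x2 d - p2)*(x3 d - p3)) - (x1 d - p1)*(x2 d - p2)*(x3 d - p3) := by
    intro d _; ring
  rw [Finset.sum_congr rfl key]
  simp only [Finset.sum_add_distrib, Finset.sum_sub_distrib, ← Finset.mul_sum,
    Finset.sum_const, nsmul_eq_mul, h1, h2, h3]
  ring

lemma aux_count_true (M : ℕ) (t c1 c2 c3 : Fin M → Bool) (h : 0 < labelCount M t true) :
    ((univ.filter fun d => t d = true ∧ c1 d = false ∧ c2 d = true ∧ c3 d = false).card : ℝ)
    = (labelCount M t true : ℝ) *
      ((1 - accuracy M t c1 true) * accuracy M t c2 true * (1 - accuracy M t c3 true)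
        - gamma2 M t c1 c2 true * (1 - accuracy M t c3 true)
        + gamma2 M t c1 c3 true * accuracy M t c2 true
        - gamma2 M t c2 c3 true * (1 - accuracy M t c1 true)
        + gamma3 M t c1 c2 c3 true) := by
  have hm : ((labelCount M t true : ℝ)) ≠ 0 := by positivity
  have hc : ((univ.filter fun d => t d = true ∧ c1 d = false ∧ c2 d = true ∧ c3 d = false).card : ℝ)
      = ∑ d ∈ univ.filter (fun d => t d = true),
          (1 - xind M t c1 d) * xind M t c2 d * (1 - xind M t c3 d) := by
    rw [← Finset.filter_filter, ← Finset.sum_boole]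
    apply Finset.sum_congr rfl
    intro d hd
    simp only [Finset.mem_filter] at hd
    cases hc1 : c1 d <;> cases hc2 : c2 d <;> cases hc3 : c3 d <;>
      simp [xind, hd.2, hc1, hc2, hc3]
  rw [hc, aux_expand_true M _ _ _ _ (accuracy M t c1 true) (accuracy M t c2 true)
      (accuracy M t c3 true) (aux_sum_xind M t c1 true h) (aux_sum_xind M t c2 true h)
      (aux_sum_xind M t c3 true h)]
  have hQ12 : (∑ d ∈ univ.filter (fun d => t d = true),
      (xind M t c1 d - accuracy M t c1 true) * (xind M t c2 d - accuracy M t c2 true))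
      = gamma2 M t c1 c2 true * (labelCount M t true : ℝ) := by
    rw [gamma2, div_mul_cancel₀ _ hm]
  have hQ13 : (∑ d ∈ univ.filter (fun d => t d = true),
      (xind M t c1 d - accuracy M t c1 true) * (xind M t c3 d - accuracy M t c3 true))
      = gamma2 M t c1 c3 true * (labelCount M t true : ℝ) := by
    rw [gamma2, div_mul_cancel₀ _ hm]
  have hQ23 : (∑ d ∈ univ.filter (fun d => t d = true),
      (xind M t c2 d - accuracy M t c2 true) * (xind M t c3 d - accuracy M t c3 true))
      = gamma2 M t c2 c3 true * (labelCount M t true : ℝ) := by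
    rw [gamma2, div_mul_cancel₀ _ hm]
  have hQ123 : (∑ d ∈ univ.filter (fun d => t d = true),
      (xind M t c1 d - accuracy M t c1 true) * (xind M t c2 d - accuracy M t c2 true) *
        (xind M t c3 d - accuracy M t c3 true))
      = gamma3 M t c1 c2 c3 true * (labelCount M t true : ℝ) := by
    rw [gamma3, div_mul_cancel₀ _ hm]
  rw [hQ12, hQ13, hQ23, hQ123,
    show ((univ.filter fun d => t d = true).card : ℝ) = (labelCount M t true : ℝ) from rfl]
  ring

lemma aux_count_false (M : ℕ) (t c1 c2 c3 : Fin M → Bool) (h : 0 < labelCount M t false) :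
    ((univ.filter fun d => t d = false ∧ c1 d = false ∧ c2 d = true ∧ c3 d = false).card : ℝ)
    = (labelCount M t false : ℝ) *
      (accuracy M t c1 false * (1 - accuracy M t c2 false) * accuracy M t c3 false
        - gamma2 M t c1 c2 false * accuracy M t c3 false
        + gamma2 M t c1 c3 false * (1 - accuracy M t c2 false)
        - gamma2 M t c2 c3 false * accuracy M t c1 false
        - gamma3 M t c1 c2 c3 false) := by
  have hm : ((labelCount M t false : ℝ)) ≠ 0 := by positivity
  have hc : ((univ.filter fun d => t d = false ∧ c1 d = false ∧ c2 d = true ∧ c3 d = false).card : ℝ)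
      = ∑ d ∈ univ.filter (fun d => t d = false),
          xind M t c1 d * (1 - xind M t c2 d) * xind M t c3 d := by
    rw [← Finset.filter_filter, ← Finset.sum_boole]
    apply Finset.sum_congr rfl
    intro d hd
    simp only [Finset.mem_filter] at hd
    cases hc1 : c1 d <;> cases hc2 : c2 d <;> cases hc3 : c3 d <;>
      simp [xind, hd.2, hc1, hc2, hc3]
  rw [hc, aux_expand_false M _ _ _ _ (accuracy M t c1 false) (accuracy M t c2 false)
      (accuracy M t c3 false) (aux_sum_xind M t c1 false h) (aux_sum_xind M t c2 false h)
      (aux_sum_xind M t c3 false h)]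
  have hQ12 : (∑ d ∈ univ.filter (fun d => t d = false),
      (xind M t c1 d - accuracy M t c1 false) * (xind M t c2 d - accuracy M t c2 false))
      = gamma2 M t c1 c2 false * (labelCount M t false : ℝ) := by
    rw [gamma2, div_mul_cancel₀ _ hm]
  have hQ13 : (∑ d ∈ univ.filter (fun d => t d = false),
      (xind M t c1 d - accuracy M t c1 false) * (xind M t c3 d - accuracy M t c3 false))
      = gamma2 M t c1 c3 false * (labelCount M t false : ℝ) := by
    rw [gamma2, div_mul_cancel₀ _ hm]
  have hQ23 : (∑ d ∈ univ.filter (fun d => t d = false),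
      (xind M t c2 d - accuracy M t c2 false) * (xind M t c3 d - accuracy M t c3 false))
      = gamma2 M t c2 c3 false * (labelCount M t false : ℝ) := by
    rw [gamma2, div_mul_cancel₀ _ hm]
  have hQ123 : (∑ d ∈ univ.filter (fun d => t d = false),
      (xind M t c1 d - accuracy M t c1 false) * (xind M t c2 d - accuracy M t c2 false) *
        (xind M t c3 d - accuracy M t c3 false))
      = gamma3 M t c1 c2 c3 false * (labelCount M t false : ℝ) := by
    rw [gamma3, div_mul_cancel₀ _ hm]
  rw [hQ12, hQ13, hQ23, hQ123,
    show ((univ.filter fun d => t d = false).card : ℝ) = (labelCount M t false : ℝ) from rfl]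
  ring

lemma aux_split (M : ℕ) (t : Fin M → Bool) (P : Fin M → Prop) [DecidablePred P] :
    (univ.filter P).card
      = (univ.filter fun d => t d = true ∧ P d).card
        + (univ.filter fun d => t d = false ∧ P d).card := by
  have h1 := Finset.card_filter_add_card_filter_not
    (s := (univ : Finset (Fin M)).filter P) (p := fun d => t d = true)
  simp only [Bool.not_eq_true, Finset.filter_filter] at h1
  rw [← h1]
  congr 1
  · exact congrArg Finset.card (Finset.filter_congr fun x _ => and_comm)
  · exact congrArg Finset.card (Finset.filter_congr fun x _ => and_comm)

/-- For three arbitrarily correlated binary classifiers on a sample of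
`M` items in which both labels occur, the frequency of the decision event `(β, α, β)`
satisfies the exact polynomial identity
`m_{β,α,β}/M = φ_α·((1 − φ_{1,α})·φ_{2,α}·(1 − φ_{3,α}) − Γ_{1,2;α}·(1 − φ_{3,α})
                 + Γ_{1,3;α}·φ_{2,α} − Γ_{2,3;α}·(1 − φ_{1,α}) + Γ_{1,2,3;α})
            + (1 − φ_α)·(φ_{1,β}·(1 − φ_{2,β})·φ_{3,β} − Γ_{1,2;β}·φ_{3,β}
                 + Γ_{1,3;β}·(1 − φ_{2,β}) − Γ_{2,3;β}·φ_{1,β} − Γ_{1,2,3;β})`. -/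
theorem decision_frequency_triple_identity
    (M : ℕ) (hM : 1 ≤ M) (t : Fin M → Bool) (c1 c2 c3 : Fin M → Bool)
    (hα : 0 < labelCount M t true) (hβ : 0 < labelCount M t false) :
    ((univ.filter fun d => c1 d = false ∧ c2 d = true ∧ c3 d = false).card : ℝ) / M =
      prevalence M t *
        ((1 - accuracy M t c1 true) * accuracy M t c2 true * (1 - accuracy M t c3 true)
          - gamma2 M t c1 c2 true * (1 - accuracy M t c3 true)
          + gamma2 M t c1 c3 true * accuracy M t c2 true
          - gamma2 M t c2 c3 true * (1 - accuracy M t c1 true)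
          + gamma3 M t c1 c2 c3 true) +
      (1 - prevalence M t) *
        (accuracy M t c1 false * (1 - accuracy M t c2 false) * accuracy M t c3 false
          - gamma2 M t c1 c2 false * accuracy M t c3 false
          + gamma2 M t c1 c3 false * (1 - accuracy M t c2 false)
          - gamma2 M t c2 c3 false * accuracy M t c1 false
          - gamma3 M t c1 c2 c3 false) := by
  have hMne : (M : ℝ) ≠ 0 := by positivity
  have hMcard : (labelCount M t true : ℝ) + (labelCount M t false : ℝ) = M := by
    have h1 := Finset.card_filter_add_card_filter_not
      (s := (univ : Finset (Fin M))) (p := fun d => t d = true)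
    simp only [Bool.not_eq_true, Finset.card_univ, Fintype.card_fin] at h1
    rw [labelCount, labelCount]
    exact_mod_cast h1
  have h1p : 1 - prevalence M t = (labelCount M t false : ℝ) / M := by
    rw [prevalence]
    field_simp
    linarith
  rw [aux_split M t (fun d => c1 d = false ∧ c2 d = true ∧ c3 d = false)]
  push_cast
  rw [aux_count_true M t c1 c2 c3 hα, aux_count_false M t c1 c2 c3 hβ, h1p, prevalence]
  ring
end

section
/- For any two scalar regressors i and j on a sample, the following ground-truth-invariant equation holds: ε_{i,i} + ε_{j,j} − 2·ε_{i,j} = (1/D) Σ_{d=1}^{D} y_{d,i}² + (1/D) Σ_{d=1}^{D} y_{d,j}² − (2/D) Σ_{d=1}^{D} y_{d,i}·y_{d,j}; in particular the right-hand side involves no knowledge of the ground-truth values y_d. -/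
/-!
A sample consists of `D` items with ground-truth values `y : Fin D → ℝ` and, for each
regressor, estimates `Fin D → ℝ`.
-/

/-- The error covariance `ε_{i,j} = (1/D) Σ_d (y_d − y_{d,i})(y_d − y_{d,j})` of two
regressors with estimates `yi`, `yj`, relative to the ground truth `y`. -/
noncomputable def errCov (D : ℕ) (y yi yj : Fin D → ℝ) : ℝ :=
  (∑ d, (y d - yi d) * (y d - yj d)) / D

/-- For any two scalar regressors `i` and `j` on a sample, the
ground-truth-invariant equation holds:
`ε_{i,i} + ε_{j,j} − 2·ε_{i,j}
  = (1/D) Σ_d y_{d,i}² + (1/D) Σ_d y_{d,j}² − (2/D) Σ_d y_{d,i}·y_{d,j}`;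
the right-hand side involves no knowledge of the ground-truth values `y_d`. -/
theorem pair_regressor_ground_truth_invariant_equation
    (D : ℕ) (hD : 1 ≤ D) (y yi yj : Fin D → ℝ) :
    errCov D y yi yi + errCov D y yj yj - 2 * errCov D y yi yj =
      (∑ d, (yi d) ^ 2) / D + (∑ d, (yj d) ^ 2) / D - 2 * (∑ d, yi d * yj d) / D := by
  have key : (∑ d, (y d - yi d)*(y d - yi d)) + (∑ d, (y d - yj d)*(y d - yj d))
      - 2 * ∑ d, (y d - yi d)*(y d - yj d)
      = (∑ d, (yi d)^2) + (∑ d, (yj d)^2) - 2 * ∑ d, yi d * yj d := by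
    rw [Finset.mul_sum, Finset.mul_sum, ← Finset.sum_add_distrib, ← Finset.sum_sub_distrib,
      ← Finset.sum_add_distrib, ← Finset.sum_sub_distrib]
    exact Finset.sum_congr rfl fun d _ => by ring
  simp only [errCov, mul_div_assoc]
  rw [← add_div, ← mul_div_assoc, ← sub_div, key, sub_div, ← add_div,
    mul_div_assoc]
end

section
/- For any four scalar regressors i, j, k, l on a sample with any ground-truth values, the following identity holds: ε_{i,j} + ε_{k,l} − ε_{i,k} − ε_{j,l} = (1/D) Σ_{d=1}^{D} (y_{d,j} − y_{d,k})·(y_{d,i} − y_{d,l}); in particular the left-hand side does not depend on the ground-truth values y_d. -/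
lemma key (D : ℕ) (y yi yj yk yl : Fin D → ℝ) :
    errCov D y yi yj + errCov D y yk yl - errCov D y yi yk - errCov D y yj yl =
      (∑ d, (yj d - yk d) * (yi d - yl d)) / D := by
  unfold errCov
  rw [← add_div, div_sub_div_same, div_sub_div_same, ← Finset.sum_add_distrib,
    ← Finset.sum_sub_distrib, ← Finset.sum_sub_distrib]
  congr 1
  apply Finset.sum_congr rfl
  intro d _
  ring

/-- For any four scalar regressors `i, j, k, l` on a sample with any
ground-truth values, the identity
`ε_{i,j} + ε_{k,l} − ε_{i,k} − ε_{j,l} = (1/D) Σ_d (y_{d,j} − y_{d,k})·(y_{d,i} − y_{d,l})`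
holds; in particular the left-hand side does not depend on the ground-truth values `y_d`. -/
theorem four_regressor_cross_term_identity
    (D : ℕ) (hD : 1 ≤ D) (y yi yj yk yl : Fin D → ℝ) :
    (errCov D y yi yj + errCov D y yk yl - errCov D y yi yk - errCov D y yj yl =
      (∑ d, (yj d - yk d) * (yi d - yl d)) / D) ∧
    (∀ y' : Fin D → ℝ,
      errCov D y' yi yj + errCov D y' yk yl - errCov D y' yi yk - errCov D y' yj yl =
        errCov D y yi yj + errCov D y yk yl - errCov D y yi yk - errCov D y yj yl) := by
  refine ⟨key D y yi yj yk yl, fun y' => ?_⟩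
  rw [key D y yi yj yk yl, key D y' yi yj yk yl]
end

section
/- For any four scalar regressors i, j, k, l on a sample with any ground-truth values, the consistency constraint ε_{i,j} + ε_{k,l} = ε_{i,k} + ε_{j,l} holds if and only if the purely observable data moment vanishes: Σ_{d=1}^{D} (y_{d,j} − y_{d,k})·(y_{d,i} − y_{d,l}) = 0. Consequently, whether the consistency constraints of the four-trio test hold can be checked from the regressors' estimates alone, without knowledge of the ground truth. -/
/-- For any four scalar regressors `i, j, k, l` on a sample with any
ground-truth values, the consistency constraint `ε_{i,j} + ε_{k,l} = ε_{i,k} + ε_{j,l}`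
holds if and only if the purely observable data moment vanishes:
`Σ_d (y_{d,j} − y_{d,k})·(y_{d,i} − y_{d,l}) = 0`.  Consequently, whether the consistency
constraints of the four-trio test hold can be checked from the regressors' estimates
alone, without knowledge of the ground truth. -/
theorem consistency_constraint_iff_data_moment_vanishes
    (D : ℕ) (hD : 1 ≤ D) (y yi yj yk yl : Fin D → ℝ) :
    errCov D y yi yj + errCov D y yk yl = errCov D y yi yk + errCov D y yj yl ↔
      ∑ d, (yj d - yk d) * (yi d - yl d) = 0 := by
  have hD0 : (D : ℝ) ≠ 0 := Nat.cast_ne_zero.mpr (by omega)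
  unfold errCov
  rw [← add_div, ← add_div, div_eq_div_iff hD0 hD0,
    mul_left_inj' hD0, ← sub_eq_zero, ← Finset.sum_add_distrib,
    ← Finset.sum_add_distrib, ← Finset.sum_sub_distrib]
  constructor <;> intro h <;> rw [← h] <;> apply Finset.sum_congr rfl <;>
    intro d _ <;> ring
end
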